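/- Let n ≥ 2, let (a_i, b_i, p_i)_{i=1}^k be a sweep of order n, and let (a'_j, b'_j, p'_j)_{j=1}^m be a transposition shuffle of order n-1. Then the concatenated lazy transposition sequence (a_1,b_1,p_1), …, (a_k,b_k,p_k), (a'_1,b'_1,p'_1), …, (a'_m,b'_m,p'_m) of order n (where the entries a'_j, b'_j ∈ {1,…,n-1} are regarded as elements of {1,…,n}) is a transposition shuffle of order n. -/

import Mathlib

open Finset

/-- The random permutation determined by outcomes `ω`: the composition `s₁ ∘ s₂ ∘ ⋯ ∘ s_ℓ`,
where `sᵢ` is the transposition swapping `a i` and `b i` if `ω i = true` and the identity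
otherwise (convention `(σ * τ) x = σ (τ x)`). -/
def lazyPerm {n ℓ : ℕ} (a b : Fin ℓ → Fin n) (ω : Fin ℓ → Bool) : Equiv.Perm (Fin n) :=
  (List.ofFn fun i => if ω i then Equiv.swap (a i) (b i) else 1).prod

/-- The weight `∏ᵢ pᵢ^{ωᵢ} (1-pᵢ)^{1-ωᵢ}` of an outcome `ω`. -/
def lazyWeight {ℓ : ℕ} (p : Fin ℓ → ℝ) (ω : Fin ℓ → Bool) : ℝ :=
  ∏ i, if ω i then p i else 1 - p i

/-- `(aᵢ, bᵢ, pᵢ)ᵢ` is a transposition shuffle of order `n`: a lazy transposition sequence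
(`aᵢ ≠ bᵢ`, `pᵢ ∈ [0,1]`) such that the induced distribution on `Sₙ` is uniform. -/
def IsTranspositionShuffle (n ℓ : ℕ) (a b : Fin ℓ → Fin n) (p : Fin ℓ → ℝ) : Prop :=
  (∀ i, a i ≠ b i) ∧ (∀ i, 0 ≤ p i ∧ p i ≤ 1) ∧
    ∀ α : Equiv.Perm (Fin n),
      ∑ ω ∈ univ.filter fun ω : Fin ℓ → Bool => lazyPerm a b ω = α,
        lazyWeight p ω = 1 / (n.factorial : ℝ)


/-- `(aᵢ, bᵢ, pᵢ)ᵢ` is a sweep of order `n`: a lazy transposition sequence such that the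
last entry `π(ω)(n)` of the resulting permutation is uniform on `{1,…,n}`
(positions are `0`-based: the last position is `⟨n-1, _⟩`). -/
def IsSweep (n ℓ : ℕ) (hn : 0 < n) (a b : Fin ℓ → Fin n) (p : Fin ℓ → ℝ) : Prop :=
  (∀ i, a i ≠ b i) ∧ (∀ i, 0 ≤ p i ∧ p i ≤ 1) ∧
    ∀ j : Fin n,
      ∑ ω ∈ univ.filter fun ω : Fin ℓ → Bool =>
          lazyPerm a b ω ⟨n - 1, Nat.sub_lt hn Nat.one_pos⟩ = j,
        lazyWeight p ω = 1 / (n : ℝ)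

lemma lazyPerm_append {n k m : ℕ} (a b : Fin k → Fin n) (c d : Fin m → Fin n)
    (ω₁ : Fin k → Bool) (ω₂ : Fin m → Bool) :
    lazyPerm (Fin.append a c) (Fin.append b d) (Fin.append ω₁ ω₂)
      = lazyPerm a b ω₁ * lazyPerm c d ω₂ := by
  unfold lazyPerm
  rw [List.ofFn_add, List.prod_append]
  simp only [show ∀ i : Fin k, Fin.castLE (Nat.le_add_right k m) i = Fin.castAdd m i from
    fun _ => rfl, Fin.append_left, Fin.append_right]

lemma lazyWeight_append {k m : ℕ} (p : Fin k → ℝ) (p' : Fin m → ℝ)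
    (ω₁ : Fin k → Bool) (ω₂ : Fin m → Bool) :
    lazyWeight (Fin.append p p') (Fin.append ω₁ ω₂)
      = lazyWeight p ω₁ * lazyWeight p' ω₂ := by
  unfold lazyWeight
  rw [Fin.prod_univ_add]
  simp only [Fin.append_left, Fin.append_right]

lemma viaEmbedding_swap {α β : Type*} [DecidableEq α] [DecidableEq β] (ι : α ↪ β)
    (x y : α) : (Equiv.swap x y).viaEmbedding ι = Equiv.swap (ι x) (ι y) := by
  ext z
  by_cases hz : z ∈ Set.range ι
  · obtain ⟨w, rfl⟩ := hz
    rw [Equiv.Perm.viaEmbedding_apply]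
    rcases eq_or_ne w x with rfl | hwx
    · simp
    rcases eq_or_ne w y with rfl | hwy
    · simp
    rw [Equiv.swap_apply_of_ne_of_ne hwx hwy,
      Equiv.swap_apply_of_ne_of_ne (fun h => hwx (ι.injective h))
        (fun h => hwy (ι.injective h))]
  · rw [Equiv.Perm.viaEmbedding_apply_of_notMem _ _ _ hz,
      Equiv.swap_apply_of_ne_of_ne (fun h => hz ⟨x, h.symm⟩) (fun h => hz ⟨y, h.symm⟩)]

lemma lazyPerm_comp_emb {n' n m : ℕ} (ι : Fin n' ↪ Fin n) (a' b' : Fin m → Fin n')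
    (ω : Fin m → Bool) :
    lazyPerm (fun j => ι (a' j)) (fun j => ι (b' j)) ω
      = Equiv.Perm.viaEmbeddingHom ι (lazyPerm a' b' ω) := by
  unfold lazyPerm
  rw [MonoidHom.map_list_prod, List.map_ofFn]
  have h : (⇑(Equiv.Perm.viaEmbeddingHom ι) ∘ fun i =>
        if ω i then Equiv.swap (a' i) (b' i) else 1)
      = fun i => if ω i then Equiv.swap (ι (a' i)) (ι (b' i)) else 1 := by
    funext i
    by_cases h : ω i
    · simp [h, Equiv.Perm.viaEmbeddingHom_apply, viaEmbedding_swap]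
    · simp [h]
  rw [h]

set_option maxHeartbeats 1000000 in
lemma exists_preimage {n : ℕ} (hn : 2 ≤ n) (hle : n - 1 ≤ n) (σ : Equiv.Perm (Fin n))
    (hσ : σ ⟨n - 1, by omega⟩ = ⟨n - 1, by omega⟩) :
    ∃ β : Equiv.Perm (Fin (n - 1)),
      Equiv.Perm.viaEmbeddingHom (Fin.castLEEmb hle) β = σ := by
  have key : ∀ x : Fin (n - 1), (σ (Fin.castLE hle x) : ℕ) < n - 1 := by
    intro x
    have h1 : (σ (Fin.castLE hle x) : ℕ) < n := (σ _).isLt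
    have h2 : σ (Fin.castLE hle x) ≠ ⟨n - 1, by omega⟩ := by
      intro h
      have := σ.injective (h.trans hσ.symm)
      have hx := x.isLt
      rw [Fin.ext_iff] at this
      simp [Fin.castLE] at this
      omega
    rw [Ne, Fin.ext_iff] at h2
    simp at h2
    omega
  set g : Fin (n - 1) → Fin (n - 1) := fun x => ⟨(σ (Fin.castLE hle x) : ℕ), key x⟩ with hg
  have ginj : Function.Injective g := by
    intro x y hxy
    simp only [hg, Fin.mk.injEq] at hxy
    have := σ.injective (Fin.ext hxy)
    exact Fin.castLE_injective hle this
  set β : Equiv.Perm (Fin (n - 1)) :=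
    Equiv.ofBijective g (Finite.injective_iff_bijective.mp ginj) with hβ
  refine ⟨β, ?_⟩
  ext z
  rw [Equiv.Perm.viaEmbeddingHom_apply]
  by_cases hz : (z : ℕ) < n - 1
  · have hz' : Fin.castLEEmb hle ⟨(z : ℕ), hz⟩ = z := Fin.ext rfl
    rw [← hz', Equiv.Perm.viaEmbedding_apply]
    have : β ⟨(z : ℕ), hz⟩ = g ⟨(z : ℕ), hz⟩ := Equiv.ofBijective_apply _ _ _
    rw [this]
    rfl
  · have hzlt := z.isLt
    have hz' : z = ⟨n - 1, by omega⟩ := Fin.ext (show (z : ℕ) = n - 1 by omega)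
    rw [Equiv.Perm.viaEmbedding_apply_of_notMem, hz', hσ]
    rintro ⟨w, rfl⟩
    exact hz w.isLt

set_option maxHeartbeats 1000000 in
/-- the concatenation of a sweep of order `n` with a transposition shuffle of
order `n - 1` (whose positions are regarded as positions of `{1,…,n}`) is a transposition
shuffle of order `n`. -/
theorem sweep_append_shuffle (n : ℕ) (hn : 2 ≤ n) (k m : ℕ)
    (a b : Fin k → Fin n) (p : Fin k → ℝ)
    (hs : IsSweep n k (by omega) a b p)
    (a' b' : Fin m → Fin (n - 1)) (p' : Fin m → ℝ)
    (h' : IsTranspositionShuffle (n - 1) m a' b' p') :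
    IsTranspositionShuffle n (k + m)
      (Fin.append a fun j => ⟨((a' j : ℕ)), by have := (a' j).isLt; omega⟩)
      (Fin.append b fun j => ⟨((b' j : ℕ)), by have := (b' j).isLt; omega⟩)
      (Fin.append p p') := by
  classical
  obtain ⟨ha, hp, hswp⟩ := hs
  obtain ⟨ha', hp', hsh⟩ := h'
  have hle : n - 1 ≤ n := by omega
  set ι : Fin (n - 1) ↪ Fin n := Fin.castLEEmb hle with hι
  show IsTranspositionShuffle n (k + m)
      (Fin.append a fun j => ι (a' j)) (Fin.append b fun j => ι (b' j)) (Fin.append p p')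
  set lastn : Fin n := ⟨n - 1, by omega⟩ with hlast
  have hswp' : ∀ j : Fin n,
      ∑ ω ∈ univ.filter fun ω : Fin k → Bool => lazyPerm a b ω lastn = j,
        lazyWeight p ω = 1 / (n : ℝ) := fun j => hswp j
  refine ⟨?_, ?_, ?_⟩
  · intro i
    refine Fin.addCases ?_ ?_ i
    · intro i; simpa only [Fin.append_left] using ha i
    · intro j
      simp only [Fin.append_right]
      intro h
      exact ha' j (ι.injective h)
  · intro i
    refine Fin.addCases ?_ ?_ i
    · intro i; simpa only [Fin.append_left] using hp i
    · intro j; simpa only [Fin.append_right] using hp' j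
  · intro α
    have hφlast : ∀ γ : Equiv.Perm (Fin (n - 1)),
        Equiv.Perm.viaEmbeddingHom ι γ lastn = lastn := by
      intro γ
      rw [hι, Equiv.Perm.viaEmbeddingHom_apply]
      apply Equiv.Perm.viaEmbedding_apply_of_notMem
      rintro ⟨w, hw⟩
      have h1 := w.isLt
      have h2 : (w : ℕ) = n - 1 := congrArg Fin.val hw
      omega
    have inner : ∀ ω₁ : Fin k → Bool,
        (∑ ω₂ : Fin m → Bool,
          if lazyPerm a b ω₁ * Equiv.Perm.viaEmbeddingHom ι (lazyPerm a' b' ω₂) = α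
          then lazyWeight p ω₁ * lazyWeight p' ω₂ else 0)
        = (if lazyPerm a b ω₁ lastn = α lastn
            then lazyWeight p ω₁ * (1 / (((n - 1).factorial : ℕ) : ℝ)) else 0) := by
      intro ω₁
      by_cases hfix : lazyPerm a b ω₁ lastn = α lastn
      · rw [if_pos hfix]
        obtain ⟨β, hβ⟩ := exists_preimage hn hle ((lazyPerm a b ω₁)⁻¹ * α)
          (by rw [Equiv.Perm.mul_apply, ← hfix, ← Equiv.Perm.mul_apply, inv_mul_cancel, Equiv.Perm.one_apply])
        have hcond : ∀ ω₂ : Fin m → Bool,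
            (lazyPerm a b ω₁ * Equiv.Perm.viaEmbeddingHom ι (lazyPerm a' b' ω₂) = α)
              ↔ lazyPerm a' b' ω₂ = β := by
          intro ω₂
          rw [← (Equiv.Perm.viaEmbeddingHom_injective ι).eq_iff
              (a := lazyPerm a' b' ω₂) (b := β), hβ, eq_inv_mul_iff_mul_eq]
        simp_rw [hcond]
        have hsplit : ∀ ω₂ : Fin m → Bool,
            (if lazyPerm a' b' ω₂ = β then lazyWeight p ω₁ * lazyWeight p' ω₂ else 0)
            = lazyWeight p ω₁ * (if lazyPerm a' b' ω₂ = β then lazyWeight p' ω₂ else 0) := by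
          intro ω₂; split <;> simp
        rw [Finset.sum_congr rfl fun ω₂ _ => hsplit ω₂, ← Finset.mul_sum,
          ← Finset.sum_filter, hsh β]
      · rw [if_neg hfix]
        refine Finset.sum_eq_zero fun ω₂ _ => ?_
        rw [if_neg]
        intro h
        apply hfix
        rw [← h, Equiv.Perm.mul_apply, hφlast]
    rw [Finset.sum_filter,
      ← Equiv.sum_comp (Fin.appendEquiv k m)
        (fun ω => if lazyPerm (Fin.append a fun j => ι (a' j))
            (Fin.append b fun j => ι (b' j)) ω = α
          then lazyWeight (Fin.append p p') ω else 0),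
      Fintype.sum_prod_type]
    have happ : ∀ (x : Fin k → Bool) (y : Fin m → Bool),
        Fin.appendEquiv k m (x, y) = Fin.append x y := fun _ _ => rfl
    simp only [happ, lazyPerm_append, lazyWeight_append, lazyPerm_comp_emb]
    rw [Finset.sum_congr rfl fun ω₁ _ => inner ω₁]
    have hsplit2 : ∀ ω₁ : Fin k → Bool,
        (if lazyPerm a b ω₁ lastn = α lastn
          then lazyWeight p ω₁ * (1 / (((n - 1).factorial : ℕ) : ℝ)) else 0)
        = (if lazyPerm a b ω₁ lastn = α lastn then lazyWeight p ω₁ else 0)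
            * (1 / (((n - 1).factorial : ℕ) : ℝ)) := by
      intro ω₁; split <;> simp
    rw [Finset.sum_congr rfl fun ω₁ _ => hsplit2 ω₁, ← Finset.sum_mul, ← Finset.sum_filter,
      hswp' (α lastn), div_mul_div_comm, one_mul, ← Nat.cast_mul,
      Nat.mul_factorial_pred (by omega)]
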